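/- Let Φ = id_m ⊗ tr_d : M_m(ℂ) ⊗ M_d(ℂ) → M_m(ℂ) be the partial trace channel. Then for every 1 ≤ p ≤ ∞ with 1/p + 1/p′ = 1, and every pure bipartite state ρ^{AA′} on H_A ⊗ (ℂ^m ⊗ ℂ^d), one has ‖(id_A ⊗ Φ)(ρ)‖_p ≤ m^{1/p′} ‖Φ(ρ^{A′})‖_p, and this constant is optimal: there is a pure state achieving equality. -/

import Mathlib

open Matrix
open scoped BigOperators ComplexOrder ENNReal

/-- Schatten `p`-norm of a Hermitian matrix (junk value `0` otherwise), computed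
spectrally; `p = ∞` gives the operator norm (largest absolute eigenvalue). -/
noncomputable def sNorm (p : ℝ≥0∞) {ι : Type*} [Fintype ι] [DecidableEq ι]
    (ρ : Matrix ι ι ℂ) : ℝ :=
  if h : ρ.IsHermitian then
    (if p = ∞ then ⨆ i, |h.eigenvalues i|
     else (∑ i, |h.eigenvalues i| ^ p.toReal) ^ (1 / p.toReal))
  else 0

/-- The ampliation `id_r ⊗ Φ` of a map `Φ` between matrix algebras. -/
def ampliate {r ι κ : Type*} (Φ : Matrix ι ι ℂ → Matrix κ κ ℂ)
    (X : Matrix (r × ι) (r × ι) ℂ) : Matrix (r × κ) (r × κ) ℂ :=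
  fun p q => Φ (fun c d => X (p.1, c) (q.1, d)) p.2 q.2

/-- Partial trace over the (first) reference system. -/
noncomputable def ptraceRef {r ι : Type*} [Fintype r]
    (X : Matrix (r × ι) (r × ι) ℂ) : Matrix ι ι ℂ :=
  fun a b => ∑ i, X (i, a) (i, b)

/-- The partial trace channel `Φ = id_m ⊗ tr_d`. -/
noncomputable def ptrChannel {m d : ℕ}
    (ρ : Matrix (Fin m × Fin d) (Fin m × Fin d) ℂ) : Matrix (Fin m) (Fin m) ℂ :=
  fun a b => ∑ j, ρ (a, j) (b, j)

/-! ### Auxiliary lemmas -/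

section Aux

variable {ι : Type*} [Fintype ι] [DecidableEq ι]

lemma trace_eq_sum_eigs {A : Matrix ι ι ℂ} (hA : A.IsHermitian) :
    A.trace = ∑ i, (hA.eigenvalues i : ℂ) := by
  conv_lhs => rw [hA.spectral_theorem]
  rw [Unitary.conjStarAlgAut_apply, Matrix.trace_mul_cycle,
    show star (hA.eigenvectorUnitary : Matrix ι ι ℂ) * (hA.eigenvectorUnitary : Matrix ι ι ℂ) = 1
      from Matrix.mem_unitaryGroup_iff'.mp hA.eigenvectorUnitary.2, one_mul, Matrix.trace_diagonal]
  rfl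

lemma sum_eigs_eq {A : Matrix ι ι ℂ} (hA : A.IsHermitian) (htr : A.trace = 1) :
    ∑ i, hA.eigenvalues i = 1 := by
  have h := trace_eq_sum_eigs hA
  rw [htr] at h
  exact_mod_cast h.symm

lemma toReal_ge_one {p : ℝ≥0∞} (hp : 1 ≤ p) (h : p ≠ ⊤) : 1 ≤ p.toReal := by
  rw [show (1:ℝ) = (1:ℝ≥0∞).toReal by simp]; exact ENNReal.toReal_mono h hp

/-- A PSD matrix whose eigenvalues sum to 1 has Schatten `p`-norm at most 1. -/
lemma sNorm_le_one (p : ℝ≥0∞) (hp : 1 ≤ p) {A : Matrix ι ι ℂ} (hA : A.PosSemidef)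
    (htr : ∑ i, hA.1.eigenvalues i = 1) : sNorm p A ≤ 1 := by
  have hnn : ∀ i, 0 ≤ hA.1.eigenvalues i := hA.eigenvalues_nonneg
  have hle1 : ∀ i, hA.1.eigenvalues i ≤ 1 := by
    intro i
    calc hA.1.eigenvalues i ≤ ∑ j, hA.1.eigenvalues j :=
          Finset.single_le_sum (fun j _ => hnn j) (Finset.mem_univ i)
      _ = 1 := htr
  rw [sNorm, dif_pos hA.1]
  split_ifs with hinf
  · rcases isEmpty_or_nonempty ι with hι | hι
    · rw [Real.iSup_of_isEmpty]; norm_num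
    · exact ciSup_le fun i => by rw [abs_of_nonneg (hnn i)]; exact hle1 i
  · have ht : 1 ≤ p.toReal := toReal_ge_one hp hinf
    have ht0 : 0 < p.toReal := lt_of_lt_of_le one_pos ht
    have hsum : ∑ i, |hA.1.eigenvalues i| ^ p.toReal ≤ 1 := by
      rw [← htr]
      refine Finset.sum_le_sum fun i _ => ?_
      rw [abs_of_nonneg (hnn i)]
      rcases eq_or_lt_of_le (hnn i) with h0 | h0
      · rw [← h0, Real.zero_rpow (ne_of_gt ht0)]
      · calc hA.1.eigenvalues i ^ p.toReal ≤ hA.1.eigenvalues i ^ (1:ℝ) :=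
              Real.rpow_le_rpow_of_exponent_ge h0 (hle1 i) ht
          _ = hA.1.eigenvalues i := Real.rpow_one _
    refine Real.rpow_le_one ?_ hsum (by positivity)
    exact Finset.sum_nonneg fun i _ => Real.rpow_nonneg (abs_nonneg _) _

end Aux

/-- Lower bound on the right-hand side: power-mean inequality. -/
lemma one_le_rhs {m : ℕ} [NeZero m] (p : ℝ≥0∞) (hp : 1 ≤ p)
    {τ : Matrix (Fin m) (Fin m) ℂ} (hτ : τ.PosSemidef)
    (htr : ∑ i, hτ.1.eigenvalues i = 1) :
    1 ≤ (m : ℝ) ^ (1 - 1 / p.toReal) * sNorm p τ := by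
  set μ := hτ.1.eigenvalues with hμdef
  have hnn : ∀ i, 0 ≤ μ i := hτ.eigenvalues_nonneg
  have hm : (0:ℝ) < m := Nat.cast_pos.mpr (Nat.pos_of_ne_zero (NeZero.ne m))
  rw [sNorm, dif_pos hτ.1]
  split_ifs with hinf
  · -- p = ∞
    rw [hinf, ENNReal.toReal_top]
    norm_num
    have hS : ∀ i, μ i ≤ ⨆ j, |μ j| := fun i =>
      le_trans (le_abs_self _)
        (le_ciSup (f := fun j => |μ j|) (Set.Finite.bddAbove (Set.finite_range _)) i)
    have h1 : (1:ℝ) ≤ m * ⨆ j, |μ j| := by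
      calc (1:ℝ) = ∑ i, μ i := htr.symm
        _ ≤ ∑ _i : Fin m, ⨆ j, |μ j| := Finset.sum_le_sum fun i _ => hS i
        _ = m * ⨆ j, |μ j| := by
            rw [Finset.sum_const, Finset.card_univ, Fintype.card_fin, nsmul_eq_mul]
    exact h1
  · have ht : 1 ≤ p.toReal := toReal_ge_one hp hinf
    have ht0 : 0 < p.toReal := lt_of_lt_of_le one_pos ht
    set t := p.toReal
    have habs : ∀ i, |μ i| = μ i := fun i => abs_of_nonneg (hnn i)
    have key := Real.arith_mean_le_rpow_mean Finset.univ (fun _ => (m:ℝ)⁻¹) μ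
      (fun i _ => by positivity)
      (by rw [Finset.sum_const, Finset.card_univ, Fintype.card_fin, nsmul_eq_mul]
          field_simp)
      (fun i _ => hnn i) ht
    have hL : ∑ i, (m:ℝ)⁻¹ * μ i = (m:ℝ)⁻¹ := by
      rw [← Finset.mul_sum, htr, mul_one]
    rw [hL] at key
    have hR : (∑ i, (m:ℝ)⁻¹ * μ i ^ t) = (m:ℝ)⁻¹ * ∑ i, μ i ^ t := by
      rw [Finset.mul_sum]
    rw [hR] at key
    set S := ∑ i, |μ i| ^ t with hSdef
    have hSeq : S = ∑ i, μ i ^ t := Finset.sum_congr rfl fun i _ => by rw [habs i]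
    have hSnn : 0 ≤ ∑ i, μ i ^ t :=
      Finset.sum_nonneg fun i _ => Real.rpow_nonneg (hnn i) _
    -- key : m⁻¹ ≤ (m⁻¹ * ∑ μ^t) ^ (1/t)
    have key2 : (m:ℝ)⁻¹ ≤ (m:ℝ)⁻¹ ^ (1/t) * (∑ i, μ i ^ t) ^ (1/t) := by
      rw [← Real.mul_rpow (by positivity) hSnn]
      exact key
    -- deduce m^{1/t-1} ≤ S^{1/t}
    have hmr : (m:ℝ)⁻¹ ^ (1/t) = ((m:ℝ) ^ (1/t))⁻¹ := Real.inv_rpow hm.le _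
    have key3 : (m:ℝ) ^ (1/t) * (m:ℝ)⁻¹ ≤ (∑ i, μ i ^ t) ^ (1/t) := by
      rw [hmr] at key2
      have := mul_le_mul_of_nonneg_left key2 (le_of_lt (Real.rpow_pos_of_pos hm (1/t)))
      calc (m:ℝ) ^ (1/t) * (m:ℝ)⁻¹ ≤ (m:ℝ) ^ (1/t) * (((m:ℝ) ^ (1/t))⁻¹ * (∑ i, μ i ^ t) ^ (1/t)) := this
        _ = (∑ i, μ i ^ t) ^ (1/t) := by
            rw [← mul_assoc, mul_inv_cancel₀ (ne_of_gt (Real.rpow_pos_of_pos hm (1/t))), one_mul]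
    calc (1:ℝ) = (m:ℝ) ^ (1 - 1/t) * ((m:ℝ) ^ (1/t) * (m:ℝ)⁻¹) := by
          rw [show (m:ℝ)⁻¹ = (m:ℝ) ^ (-1:ℝ) by rw [Real.rpow_neg_one],
            ← Real.rpow_add hm, ← Real.rpow_add hm,
            show 1 - 1/t + (1/t + -1) = (0:ℝ) from by ring, Real.rpow_zero]
      _ ≤ (m:ℝ) ^ (1 - 1/t) * (∑ i, μ i ^ t) ^ (1/t) :=
          mul_le_mul_of_nonneg_left key3 (Real.rpow_nonneg hm.le _)
      _ = (m:ℝ) ^ (1 - 1/t) * S ^ (1/t) := by rw [hSeq]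

lemma eigs_of_idem {ι : Type*} [Fintype ι] [DecidableEq ι] {A : Matrix ι ι ℂ}
    (hA : A.IsHermitian) (hidem : A * A = A) (i : ι) :
    hA.eigenvalues i = 0 ∨ hA.eigenvalues i = 1 := by
  set U := (hA.eigenvectorUnitary : Matrix ι ι ℂ) with hU
  have hUU : U * star U = 1 := Matrix.mem_unitaryGroup_iff.mp hA.eigenvectorUnitary.2
  have hD : star U * A * U = diagonal ((RCLike.ofReal ∘ hA.eigenvalues) : ι → ℂ) := by
    rw [← hA.conjStarAlgAut_star_eigenvectorUnitary, Unitary.conjStarAlgAut_star_apply]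
  have h2 : diagonal ((RCLike.ofReal ∘ hA.eigenvalues) : ι → ℂ)
        * diagonal ((RCLike.ofReal ∘ hA.eigenvalues) : ι → ℂ)
      = diagonal ((RCLike.ofReal ∘ hA.eigenvalues) : ι → ℂ) := by
    rw [← hD]
    calc (star U * A * U) * (star U * A * U) = star U * (A * A) * U := by
          simp only [Matrix.mul_assoc]
          rw [← Matrix.mul_assoc U (star U) (A * U), hUU, Matrix.one_mul]
      _ = star U * A * U := by rw [hidem, Matrix.mul_assoc]
  rw [Matrix.diagonal_mul_diagonal] at h2
  have h3 := congrFun (congrFun h2 i) i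
  simp only [Matrix.diagonal_apply_eq, Pi.mul_apply, Function.comp_apply] at h3
  have h4 : hA.eigenvalues i * hA.eigenvalues i = hA.eigenvalues i := by exact_mod_cast h3
  rcases eq_or_ne (hA.eigenvalues i) 0 with h | h
  · exact Or.inl h
  · exact Or.inr (by field_simp at h4; exact h4)

lemma eigs_smul_one {m : ℕ} [NeZero m] {c : ℝ}
    (h : (((c:ℂ)) • (1 : Matrix (Fin m) (Fin m) ℂ)).IsHermitian) (i : Fin m) :
    h.eigenvalues i = c := by
  have hD : star (h.eigenvectorUnitary : Matrix (Fin m) (Fin m) ℂ) * (((c:ℂ)) • (1 : Matrix (Fin m) (Fin m) ℂ))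
      * (h.eigenvectorUnitary : Matrix (Fin m) (Fin m) ℂ) = diagonal ((RCLike.ofReal ∘ h.eigenvalues) : Fin m → ℂ) := by
    rw [← h.conjStarAlgAut_star_eigenvectorUnitary, Unitary.conjStarAlgAut_star_apply]
  rw [Matrix.mul_smul, Matrix.smul_mul, Matrix.mul_one,
    Matrix.mem_unitaryGroup_iff'.mp h.eigenvectorUnitary.2] at hD
  have h3 := congrFun (congrFun hD.symm i) i
  simp only [Matrix.diagonal_apply_eq, Function.comp_apply, Matrix.smul_apply,
    Matrix.one_apply_eq, smul_eq_mul, mul_one] at h3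
  exact Complex.ofReal_inj.mp h3

/-- A Hermitian idempotent with eigenvalue sum 1 has Schatten norm 1. -/
lemma sNorm_proj (p : ℝ≥0∞) (hp : 1 ≤ p) {ι : Type*} [Fintype ι] [DecidableEq ι]
    {A : Matrix ι ι ℂ} (hA : A.IsHermitian) (hidem : A * A = A)
    (htr : ∑ i, hA.eigenvalues i = 1) : sNorm p A = 1 := by
  have hvals := eigs_of_idem hA hidem
  have hex : ∃ i, hA.eigenvalues i = 1 := by
    by_contra hc
    push_neg at hc
    have hz : ∀ i, hA.eigenvalues i = 0 := fun i => (hvals i).resolve_right (hc i)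
    rw [Finset.sum_congr rfl (fun i _ => hz i), Finset.sum_const, smul_zero] at htr
    norm_num at htr
  obtain ⟨i0, hi0⟩ := hex
  have : Nonempty ι := ⟨i0⟩
  rw [sNorm, dif_pos hA]
  split_ifs with hinf
  · apply le_antisymm
    · exact ciSup_le fun i => by rcases hvals i with h | h <;> simp [h]
    · calc (1:ℝ) = |hA.eigenvalues i0| := by rw [hi0]; norm_num
        _ ≤ ⨆ j, |hA.eigenvalues j| :=
            le_ciSup (f := fun j => |hA.eigenvalues j|)
              (Set.Finite.bddAbove (Set.finite_range _)) i0
  · have ht0 : p.toReal ≠ 0 := ne_of_gt (lt_of_lt_of_le one_pos (toReal_ge_one hp hinf))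
    have hsum : ∑ i, |hA.eigenvalues i| ^ p.toReal = 1 := by
      rw [← htr]
      refine Finset.sum_congr rfl fun i _ => ?_
      rcases hvals i with h | h <;> simp [h, Real.zero_rpow ht0]
    rw [hsum, Real.one_rpow]

/-- Schatten norm computation for the scaled identity `m⁻¹ • 1`. -/
lemma rhs_eq_one {m : ℕ} [NeZero m] (p : ℝ≥0∞) (hp : 1 ≤ p)
    (hτh : ((((m:ℝ)⁻¹ : ℝ) : ℂ) • (1 : Matrix (Fin m) (Fin m) ℂ)).IsHermitian) :
    (m : ℝ) ^ (1 - 1 / p.toReal)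
      * sNorm p ((((m:ℝ)⁻¹ : ℝ) : ℂ) • (1 : Matrix (Fin m) (Fin m) ℂ)) = 1 := by
  have hm : (0:ℝ) < m := Nat.cast_pos.mpr (Nat.pos_of_ne_zero (NeZero.ne m))
  have he : ∀ i : Fin m, |hτh.eigenvalues i| = (m:ℝ)⁻¹ := fun i => by
    rw [eigs_smul_one hτh i, abs_of_nonneg (by positivity)]
  rw [sNorm, dif_pos hτh]
  split_ifs with hinf
  · simp only [he, ciSup_const]
    rw [hinf, ENNReal.toReal_top, div_zero, sub_zero, Real.rpow_one]
    exact mul_inv_cancel₀ (ne_of_gt hm)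
  · have ht : 1 ≤ p.toReal := toReal_ge_one hp hinf
    have ht0 : p.toReal ≠ 0 := ne_of_gt (lt_of_lt_of_le one_pos ht)
    set t := p.toReal with htdef
    have hsum : ∑ i : Fin m, |hτh.eigenvalues i| ^ t = (m:ℝ) ^ (1 - t) := by
      simp only [he]
      rw [Finset.sum_const, Finset.card_univ, Fintype.card_fin, nsmul_eq_mul,
        Real.inv_rpow hm.le, Real.rpow_sub hm, Real.rpow_one, div_eq_mul_inv]
    rw [hsum, ← Real.rpow_mul hm.le, ← Real.rpow_add hm,
      show 1 - 1/t + (1-t) * (1/t) = 0 from by field_simp; ring, Real.rpow_zero]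

lemma trace_mul_conjTranspose_self {α β : Type*} [Fintype α] [Fintype β] [DecidableEq α]
    (M : Matrix α β ℂ) :
    (M * Mᴴ).trace = ((∑ x, ∑ j, ‖M x j‖ ^ 2 : ℝ) : ℂ) := by
  have key : ∀ z : ℂ, z * star z = ((‖z‖ ^ 2 : ℝ) : ℂ) := fun z => by
    rw [RCLike.star_def, Complex.mul_conj, Complex.normSq_eq_norm_sq]
  calc (M * Mᴴ).trace = ∑ x, ∑ j, ((‖M x j‖ ^ 2 : ℝ) : ℂ) := by
        rw [Matrix.trace]
        refine Finset.sum_congr rfl fun x _ => ?_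
        rw [Matrix.diag_apply, Matrix.mul_apply]
        refine Finset.sum_congr rfl fun j _ => ?_
        rw [Matrix.conjTranspose_apply, key]
    _ = ((∑ x, ∑ j, ‖M x j‖ ^ 2 : ℝ) : ℂ) := by norm_cast

/-- For the partial trace channel `Φ = id_m ⊗ tr_d`, for every
`1 ≤ p ≤ ∞` with `1/p + 1/p′ = 1` and every pure bipartite state `ρ = ψψ*` on
`H_A ⊗ (ℂ^m ⊗ ℂ^d)`, one has
`‖(id_A ⊗ Φ)(ρ)‖_p ≤ m^{1/p′} ‖Φ(ρ^{A′})‖_p`, and the constant `m^{1/p′}` is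
optimal: some pure state achieves equality. -/
theorem ptrChannel_schatten_bound {m d : ℕ} [NeZero m] [NeZero d]
    (p : ℝ≥0∞) (hp : 1 ≤ p) :
    (∀ (r : ℕ) (ψ : Fin r × (Fin m × Fin d) → ℂ), (∑ x, ‖ψ x‖ ^ 2 = 1) →
      sNorm p (ampliate ptrChannel (Matrix.vecMulVec ψ (star ψ)))
        ≤ (m : ℝ) ^ (1 - 1 / p.toReal) *
            sNorm p (ptrChannel (ptraceRef (Matrix.vecMulVec ψ (star ψ))))) ∧
    (∃ (r : ℕ) (ψ : Fin r × (Fin m × Fin d) → ℂ), (∑ x, ‖ψ x‖ ^ 2 = 1) ∧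
      sNorm p (ampliate ptrChannel (Matrix.vecMulVec ψ (star ψ)))
        = (m : ℝ) ^ (1 - 1 / p.toReal) *
            sNorm p (ptrChannel (ptraceRef (Matrix.vecMulVec ψ (star ψ))))) := by
  constructor
  · -- the inequality
    intro r ψ hψ
    set B := Matrix.of fun (x : Fin r × Fin m) (j : Fin d) => ψ (x.1, (x.2, j)) with hB
    set C := Matrix.of fun (i : Fin m) (q : Fin r × Fin d) => ψ (q.1, (i, q.2)) with hC
    have hσeq : ampliate ptrChannel (Matrix.vecMulVec ψ (star ψ)) = B * Bᴴ := by
      ext ⟨a, i⟩ ⟨b, k⟩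
      simp [hB, ampliate, ptrChannel, Matrix.vecMulVec, Matrix.mul_apply,
        Matrix.conjTranspose_apply]
    have hτeq : ptrChannel (ptraceRef (Matrix.vecMulVec ψ (star ψ))) = C * Cᴴ := by
      ext i k
      simp only [hC, ptrChannel, ptraceRef, Matrix.vecMulVec, Matrix.mul_apply,
        Matrix.conjTranspose_apply, Matrix.of_apply, Fintype.sum_prod_type, Pi.star_apply]
      rw [Finset.sum_comm]
    have hσpsd := Matrix.posSemidef_self_mul_conjTranspose B
    have hτpsd := Matrix.posSemidef_self_mul_conjTranspose C
    have htrσ : (B * Bᴴ).trace = 1 := by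
      rw [trace_mul_conjTranspose_self]
      rw [show (∑ x : Fin r × Fin m, ∑ j : Fin d, ‖B x j‖ ^ 2 : ℝ)
          = ∑ y : Fin r × (Fin m × Fin d), ‖ψ y‖ ^ 2 from by
        simp [hB, Fintype.sum_prod_type], hψ, Complex.ofReal_one]
    have htrτ : (C * Cᴴ).trace = 1 := by
      rw [trace_mul_conjTranspose_self]
      rw [show (∑ i : Fin m, ∑ q : Fin r × Fin d, ‖C i q‖ ^ 2 : ℝ)
          = ∑ y : Fin r × (Fin m × Fin d), ‖ψ y‖ ^ 2 from by
        simp only [hC, Fintype.sum_prod_type, Matrix.of_apply]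
        rw [Finset.sum_comm], hψ, Complex.ofReal_one]
    rw [hσeq, hτeq]
    exact le_trans (sNorm_le_one p hp hσpsd (sum_eigs_eq _ htrσ))
      (one_le_rhs p hp hτpsd (sum_eigs_eq _ htrτ))
  · -- optimality: the maximally entangled state
    have hm : (0:ℝ) < m := Nat.cast_pos.mpr (Nat.pos_of_ne_zero (NeZero.ne m))
    set c : ℝ := (Real.sqrt m)⁻¹ with hc
    have hc0 : 0 ≤ c := by positivity
    have hc2 : c * c = (m:ℝ)⁻¹ := by
      rw [hc, ← mul_inv, Real.mul_self_sqrt hm.le]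
    refine ⟨m, fun x => if x.1 = x.2.1 ∧ x.2.2 = 0 then (c : ℂ) else 0, ?_, ?_⟩
    · -- normalization
      have hn : ∀ x : Fin m × (Fin m × Fin d),
          ‖if x.1 = x.2.1 ∧ x.2.2 = 0 then (c : ℂ) else 0‖ ^ 2
            = if x.1 = x.2.1 ∧ x.2.2 = 0 then (m:ℝ)⁻¹ else 0 := by
        intro x
        split_ifs with h
        · rw [Complex.norm_real, Real.norm_eq_abs, abs_of_nonneg hc0, sq, hc2]
        · simp
      rw [Finset.sum_congr rfl fun x _ => hn x]
      simp only [Fintype.sum_prod_type, ite_and]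
      simp [Finset.sum_ite_eq, Finset.sum_ite_eq']
    · -- equality
      set ψ : Fin m × (Fin m × Fin d) → ℂ :=
        fun x => if x.1 = x.2.1 ∧ x.2.2 = 0 then (c : ℂ) else 0 with hψdef
      set v : Fin m × Fin m → ℂ := fun y => if y.1 = y.2 then (c : ℂ) else 0 with hv
      have hveq : Matrix.vecMulVec v (star v) = replicateCol Unit v * (replicateCol Unit v)ᴴ := by
        rw [Matrix.conjTranspose_replicateCol, ← Matrix.vecMulVec_eq]
      have hσeq : ampliate ptrChannel (Matrix.vecMulVec ψ (star ψ))
          = Matrix.vecMulVec v (star v) := by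
        ext ⟨a, i⟩ ⟨b, k⟩
        simp only [ampliate, ptrChannel, Matrix.vecMulVec_apply, Pi.star_apply, hψdef, hv,
          Matrix.vecMulVec, Matrix.of_apply]
        simp [ite_and, apply_ite (star : ℂ → ℂ), mul_ite, ite_mul, Finset.sum_ite_eq,
          Finset.sum_ite_eq']
      have hσpsd : (Matrix.vecMulVec v (star v)).PosSemidef := by
        rw [hveq]; exact Matrix.posSemidef_self_mul_conjTranspose _
      have hvsum : ∑ y : Fin m × Fin m, star (v y) * v y = 1 := by
        have hn : ∀ y : Fin m × Fin m,
            star (v y) * v y = if y.1 = y.2 then ((m:ℝ)⁻¹ : ℂ) else 0 := by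
          intro y
          simp only [hv]
          split_ifs with h
          · rw [RCLike.star_def, Complex.conj_ofReal, ← Complex.ofReal_mul, hc2]
            norm_cast
          · simp
        rw [Finset.sum_congr rfl fun y _ => hn y]
        simp only [Fintype.sum_prod_type]
        simp [Finset.sum_ite_eq, Finset.sum_ite_eq']
      have hmid : (replicateCol Unit v)ᴴ * replicateCol Unit v = 1 := by
        ext u u'
        rw [Matrix.mul_apply]
        simp only [Matrix.conjTranspose_apply, Matrix.replicateCol_apply]
        rw [show ∑ y : Fin m × Fin m, star (v y) * v y = 1 from hvsum]
        simp [Matrix.one_apply]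
      have hidem : Matrix.vecMulVec v (star v) * Matrix.vecMulVec v (star v)
          = Matrix.vecMulVec v (star v) := by
        rw [hveq]
        calc replicateCol Unit v * (replicateCol Unit v)ᴴ * (replicateCol Unit v * (replicateCol Unit v)ᴴ)
            = replicateCol Unit v * ((replicateCol Unit v)ᴴ * replicateCol Unit v * (replicateCol Unit v)ᴴ) := by
              simp only [Matrix.mul_assoc]
          _ = replicateCol Unit v * (replicateCol Unit v)ᴴ := by rw [hmid, Matrix.one_mul]
      have htrσ : (Matrix.vecMulVec v (star v)).trace = 1 := by
        rw [Matrix.trace]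
        calc ∑ y, (Matrix.vecMulVec v (star v)).diag y
            = ∑ y, star (v y) * v y := by
              refine Finset.sum_congr rfl fun y _ => ?_
              rw [Matrix.diag_apply, Matrix.vecMulVec_apply, Pi.star_apply, mul_comm]
          _ = 1 := hvsum
      have hτh : ((((m:ℝ)⁻¹ : ℝ) : ℂ) • (1 : Matrix (Fin m) (Fin m) ℂ)).IsHermitian := by
        show _ᴴ = _
        rw [Matrix.conjTranspose_smul, Matrix.conjTranspose_one, RCLike.star_def,
          Complex.conj_ofReal]
      have hτeq : ptrChannel (ptraceRef (Matrix.vecMulVec ψ (star ψ)))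
          = (((m:ℝ)⁻¹ : ℝ) : ℂ) • (1 : Matrix (Fin m) (Fin m) ℂ) := by
        ext i k
        simp only [ptrChannel, ptraceRef, Matrix.vecMulVec_apply, Pi.star_apply, hψdef,
          Matrix.smul_apply, Matrix.one_apply, smul_eq_mul]
        simp only [ite_and, apply_ite (star : ℂ → ℂ), mul_ite, ite_mul, star_zero, mul_zero,
          zero_mul, RCLike.star_def, Complex.conj_ofReal]
        rw [Finset.sum_comm]
        simp [Finset.sum_ite_eq, Finset.sum_ite_eq', ← Complex.ofReal_mul, hc2]
        split_ifs <;> simp_all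
      rw [hσeq, hτeq, sNorm_proj p hp hσpsd.1 hidem (sum_eigs_eq _ htrσ),
        rhs_eq_one p hp hτh]
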